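/- Let d ≥ 2, let (B_i)_{i≥1} be independent Bernoulli random variables with P(B_i = 1) = (d+1)/(d·i+1), and set G_m := Σ_{i=1}^m B_i. Then G_m / log m converges in probability to (d+1)/d as m → ∞, i.e. for every ε > 0, P(|G_m/log m − (d+1)/d| > ε) → 0. -/

import Mathlib

open MeasureTheory ProbabilityTheory Filter
open scoped ENNReal

lemma aux_sum_inv_succ (m : ℕ) :
    ∑ i ∈ Finset.Icc 1 m, ((i : ℝ) + 1)⁻¹ = (harmonic (m + 1) : ℝ) - 1 := by
  induction m with
  | zero => simp [harmonic]
  | succ n ih =>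
      rw [Finset.sum_Icc_succ_top (by omega), ih, harmonic_succ (n+1)]
      push_cast
      ring

lemma aux_harmonic_cast (m : ℕ) :
    (harmonic m : ℝ) = ∑ i ∈ Finset.Icc 1 m, ((i : ℝ))⁻¹ := by
  rw [harmonic_eq_sum_Icc]
  push_cast
  rfl

/-- Let `d ≥ 2`, let `(B_i)_{i≥1}` be independent Bernoulli random variables with
`P(B_i = 1) = (d+1)/(d·i+1)`, and `G_m = Σ_{i=1}^m B_i`.  Then `G_m / log m` converges in
probability to `(d+1)/d` as `m → ∞`: for every `ε > 0`,
`P(|G_m/log m − (d+1)/d| > ε) → 0`. -/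
theorem generation_law_of_large_numbers (d : ℕ) (hd : 2 ≤ d)
    {Ω : Type*} [MeasurableSpace Ω] (P : Measure Ω) [IsProbabilityMeasure P]
    (B : ℕ → Ω → ℕ) (hBmeas : ∀ i, Measurable (B i))
    (hB01 : ∀ i ω, B i ω ≤ 1)
    (hBdist : ∀ i : ℕ, 1 ≤ i →
      P {ω | B i ω = 1} = ENNReal.ofReal (((d : ℝ) + 1) / ((d : ℝ) * i + 1)))
    (hBindep : iIndepFun B P) :
    ∀ ε : ℝ, 0 < ε →
      Tendsto (fun m : ℕ =>
          P {ω | ε < |((∑ i ∈ Finset.Icc 1 m, B i ω : ℕ) : ℝ) / Real.log m -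
            ((d : ℝ) + 1) / d|})
        atTop (nhds 0) := by
  intro ε hε
  have hd0 : (0:ℝ) < d := by
    have : 0 < d := by omega
    exact_mod_cast this
  set c₀ : ℝ := ((d:ℝ)+1)/(d:ℝ) with hc₀
  have hc₀pos : 0 < c₀ := by positivity
  set X : ℕ → Ω → ℝ := fun i ω => (B i ω : ℝ) with hXdef
  have hXmeas : ∀ i, Measurable (X i) := fun i => measurable_from_top.comp (hBmeas i)
  have hXmem : ∀ i, MemLp (X i) 2 P := fun i =>
    MemLp.of_bound (hXmeas i).aestronglyMeasurable 1 (ae_of_all _ fun ω => by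
      have h := hB01 i ω
      have h0 : (0:ℝ) ≤ (B i ω : ℝ) := by positivity
      rw [hXdef]
      simp only [Real.norm_eq_abs, abs_of_nonneg h0]
      exact_mod_cast h)
  have hXint : ∀ i, Integrable (X i) P := fun i => (hXmem i).integrable one_le_two
  set p : ℕ → ℝ := fun i => ((d:ℝ)+1)/((d:ℝ)*i+1) with hpdef
  have hppos : ∀ i, 0 < p i := fun i => by
    have : (0:ℝ) ≤ (i:ℝ) := by positivity
    rw [hpdef]
    positivity
  -- expectation of X i
  have hXE : ∀ i, 1 ≤ i → ∫ ω, X i ω ∂P = p i := by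
    intro i hi
    have hXeq : X i = Set.indicator {ω | B i ω = 1} (fun _ => (1:ℝ)) := by
      funext ω
      rcases Nat.le_one_iff_eq_zero_or_eq_one.mp (hB01 i ω) with h | h <;>
        simp [hXdef, h, Set.indicator_apply, Set.mem_setOf_eq]
    have hAmeas : MeasurableSet {ω | B i ω = 1} := hBmeas i (measurableSet_singleton 1)
    rw [hXeq]
    rw [integral_indicator_const (1:ℝ) hAmeas, measureReal_def, hBdist i hi,
      ENNReal.toReal_ofReal (by positivity), smul_eq_mul, mul_one]
  have hXsq : ∀ i, X i ^ 2 = X i := by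
    intro i; funext ω
    rcases Nat.le_one_iff_eq_zero_or_eq_one.mp (hB01 i ω) with h | h <;>
      simp [hXdef, h]
  have hVar : ∀ i, 1 ≤ i → variance (X i) P ≤ p i := by
    intro i hi
    rw [variance_eq_sub (hXmem i), hXsq i]
    have h1 : ∫ ω, X i ω ∂P = p i := hXE i hi
    rw [show P[X i] = ∫ ω, X i ω ∂P from rfl, h1]
    nlinarith [sq_nonneg (p i)]
  have hXindep : iIndepFun X P :=
    hBindep.comp (fun _ => ((↑) : ℕ → ℝ)) (fun _ => measurable_from_top)
  set S : ℕ → Ω → ℝ := fun m => ∑ i ∈ Finset.Icc 1 m, X i with hSdef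
  set M : ℕ → ℝ := fun m => ∑ i ∈ Finset.Icc 1 m, p i with hMdef
  have hSmem : ∀ m, MemLp (S m) 2 P := fun m => memLp_finset_sum' _ fun i _ => hXmem i
  have hSE : ∀ m, ∫ ω, S m ω ∂P = M m := by
    intro m
    calc ∫ ω, S m ω ∂P = ∫ ω, ∑ i ∈ Finset.Icc 1 m, X i ω ∂P := by
          simp [hSdef]
      _ = ∑ i ∈ Finset.Icc 1 m, ∫ ω, X i ω ∂P :=
          integral_finset_sum _ fun i _ => (hXint i)
      _ = M m := by
          rw [hMdef]
          exact Finset.sum_congr rfl fun i hi => hXE i (Finset.mem_Icc.mp hi).1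
  have hSvar : ∀ m, variance (S m) P ≤ M m := by
    intro m
    have h1 : variance (S m) P = ∑ i ∈ Finset.Icc 1 m, variance (X i) P := by
      rw [hSdef]
      exact IndepFun.variance_sum (fun i _ => hXmem i)
        (fun i _ j _ hij => hXindep.indepFun hij)
    rw [h1, hMdef]
    exact Finset.sum_le_sum fun i hi => hVar i (Finset.mem_Icc.mp hi).1
  -- bounds on M
  have hMupper : ∀ m : ℕ, M m ≤ c₀ * (1 + Real.log m) := by
    intro m
    have h1 : M m ≤ ∑ i ∈ Finset.Icc 1 m, c₀ * (i:ℝ)⁻¹ := by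
      rw [hMdef]
      apply Finset.sum_le_sum
      intro i hi
      have hi1 : 1 ≤ i := (Finset.mem_Icc.mp hi).1
      have hipos : (0:ℝ) < i := by exact_mod_cast hi1
      have h2 : p i ≤ ((d:ℝ)+1)/((d:ℝ)*i) := by
        rw [hpdef]
        exact div_le_div_of_nonneg_left (by positivity) (by positivity) (by linarith)
      have h3 : ((d:ℝ)+1)/((d:ℝ)*i) = c₀ * (i:ℝ)⁻¹ := by
        rw [hc₀]; field_simp
      linarith
    rw [← Finset.mul_sum, ← aux_harmonic_cast] at h1
    have h4 := harmonic_le_one_add_log m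
    nlinarith
  have hMlower : ∀ m : ℕ, c₀ * (Real.log ((m:ℝ)+2) - 1) ≤ M m := by
    intro m
    have h1 : ∑ i ∈ Finset.Icc 1 m, c₀ * ((i:ℝ)+1)⁻¹ ≤ M m := by
      rw [hMdef]
      apply Finset.sum_le_sum
      intro i hi
      have hipos : (0:ℝ) ≤ i := by positivity
      have h2 : c₀ * ((i:ℝ)+1)⁻¹ = ((d:ℝ)+1)/((d:ℝ)*((i:ℝ)+1)) := by
        rw [hc₀]; field_simp
      rw [h2, hpdef]
      have hd1 : (1:ℝ) ≤ (d:ℝ) := by exact_mod_cast (by omega : 1 ≤ d)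
      apply div_le_div_of_nonneg_left (by positivity) (by positivity) (by nlinarith)
    rw [← Finset.mul_sum, aux_sum_inv_succ] at h1
    have h2 : Real.log ((m:ℝ)+2) ≤ (harmonic (m+1) : ℝ) := by
      have h3 := log_add_one_le_harmonic (m+1)
      push_cast at h3 ⊢
      have h4 : ((m:ℝ)+1+1) = (m:ℝ)+2 := by ring
      rw [h4] at h3
      exact h3
    nlinarith
  -- the bound sequence tends to 0
  have hLtop : Tendsto (fun m : ℕ => Real.log m) atTop atTop :=
    Real.tendsto_log_atTop.comp tendsto_natCast_atTop_atTop
  have hbound0 : Tendsto (fun m : ℕ =>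
      ENNReal.ofReal ((c₀/(ε/2)^2) * ((Real.log m)⁻¹ + ((Real.log m)^2)⁻¹)))
      atTop (nhds 0) := by
    have ha : Tendsto (fun m : ℕ => (Real.log m)⁻¹) atTop (nhds 0) :=
      tendsto_inv_atTop_zero.comp hLtop
    have hb : Tendsto (fun m : ℕ => ((Real.log m)^2)⁻¹) atTop (nhds 0) :=
      tendsto_inv_atTop_zero.comp ((tendsto_pow_atTop two_ne_zero).comp hLtop)
    have h1 : Tendsto (fun m : ℕ =>
        (c₀/(ε/2)^2) * ((Real.log m)⁻¹ + ((Real.log m)^2)⁻¹)) atTop (nhds 0) := by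
      have := (ha.add hb).const_mul (c₀/(ε/2)^2)
      simpa using this
    have h2 := (ENNReal.continuous_ofReal.tendsto 0).comp h1
    simpa [Function.comp_def] using h2
  apply tendsto_of_tendsto_of_tendsto_of_le_of_le' tendsto_const_nhds hbound0
  · exact Eventually.of_forall fun m => zero_le
  · filter_upwards [hLtop.eventually_ge_atTop 1, hLtop.eventually_ge_atTop (2*c₀/ε),
      eventually_ge_atTop 1] with m hL1 hLc hm1
    have hLpos : (0:ℝ) < Real.log m := by linarith
    have hcpos : (0:ℝ) < ε/2 * Real.log m := by
      have := half_pos hε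
      positivity
    have hc : c₀ ≤ ε/2 * Real.log m := by
      rw [div_le_iff₀ hε] at hLc
      linarith
    have hMlb : c₀ * (Real.log m - 1) ≤ M m := by
      have h := hMlower m
      have hlog : Real.log m ≤ Real.log ((m:ℝ)+2) :=
        Real.log_le_log (by exact_mod_cast Nat.cast_pos.mpr hm1) (by linarith)
      nlinarith
    have hMub := hMupper m
    -- inclusion of events
    have hsub : {ω | ε < |((∑ i ∈ Finset.Icc 1 m, B i ω : ℕ) : ℝ) / Real.log m - c₀|}
        ⊆ {ω | ε/2 * Real.log m ≤ |S m ω - ∫ x, S m x ∂P|} := by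
      intro ω hω
      simp only [Set.mem_setOf_eq] at hω ⊢
      have hcast : ((∑ i ∈ Finset.Icc 1 m, B i ω : ℕ) : ℝ) = S m ω := by
        simp [hSdef, hXdef, Finset.sum_apply]
      rw [hcast] at hω
      rw [hSE m]
      have hb : |M m / Real.log m - c₀| ≤ ε/2 := by
        have h1 : |M m - c₀ * Real.log m| ≤ c₀ := by
          rw [abs_le]
          constructor <;> nlinarith
        have h2 : |M m / Real.log m - c₀| = |M m - c₀ * Real.log m| / Real.log m := by
          rw [show M m / Real.log m - c₀ = (M m - c₀ * Real.log m)/Real.log m by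
            field_simp, abs_div, abs_of_pos hLpos]
        rw [h2, div_le_iff₀ hLpos]
        nlinarith
      have h3 : |S m ω / Real.log m - M m / Real.log m| = |S m ω - M m| / Real.log m := by
        rw [show S m ω / Real.log m - M m / Real.log m = (S m ω - M m)/Real.log m by ring,
          abs_div, abs_of_pos hLpos]
      have h4 := abs_sub_abs_le_abs_sub (S m ω / Real.log m - c₀) (M m / Real.log m - c₀)
      rw [show (S m ω / Real.log m - c₀) - (M m / Real.log m - c₀)
          = S m ω / Real.log m - M m / Real.log m by ring, h3] at h4
      have h6 : ε/2 < |S m ω - M m| / Real.log m := by linarith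
      exact ((lt_div_iff₀ hLpos).mp h6).le
    calc P {ω | ε < |((∑ i ∈ Finset.Icc 1 m, B i ω : ℕ) : ℝ) / Real.log m - c₀|}
        ≤ P {ω | ε/2 * Real.log m ≤ |S m ω - ∫ x, S m x ∂P|} := measure_mono hsub
      _ ≤ ENNReal.ofReal (variance (S m) P / (ε/2 * Real.log m)^2) :=
          meas_ge_le_variance_div_sq (hSmem m) hcpos
      _ ≤ ENNReal.ofReal ((c₀/(ε/2)^2) * ((Real.log m)⁻¹ + ((Real.log m)^2)⁻¹)) := by
          apply ENNReal.ofReal_le_ofReal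
          have hv : variance (S m) P ≤ c₀ * (1 + Real.log m) := (hSvar m).trans hMub
          have heq : (c₀/(ε/2)^2) * ((Real.log m)⁻¹ + ((Real.log m)^2)⁻¹)
              = c₀ * (1 + Real.log m) / (ε/2 * Real.log m)^2 := by
            field_simp
            ring
          rw [heq]
          gcongr
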